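/- In the Lie algebra 𝔤, the linear span 𝔥 of {e₁, e₃, e₄} is a Lie subalgebra of dimension 3, and for any real numbers j₁, j₂ the linear functional λ on 𝔤 defined by λ(e₁) = j₁, λ(e₂) = 0, λ(e₃) = 0, λ(e₄) = j₂ vanishes on the derived subalgebra [𝔥, 𝔥]; i.e. 𝔥 is a polarization of λ. -/
import Mathlib


/-- The structure constants `C^l_{ij}` of the Lie algebra `𝔤` (indices `0,…,3` for `1,…,4`):
the nonzero brackets are `[e₂,e₃] = k e₁`, `[e₂,e₄] = −(k/2) e₂`, `[e₃,e₄] = (k/2) e₃`. -/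
noncomputable def structC (k : ℝ) (i j l : Fin 4) : ℝ :=
  if i = 1 ∧ j = 2 ∧ l = 0 then k
  else if i = 2 ∧ j = 1 ∧ l = 0 then -k
  else if i = 1 ∧ j = 3 ∧ l = 1 then -(k / 2)
  else if i = 3 ∧ j = 1 ∧ l = 1 then k / 2
  else if i = 2 ∧ j = 3 ∧ l = 2 then k / 2
  else if i = 3 ∧ j = 2 ∧ l = 2 then -(k / 2)
  else 0

/-- The Lie bracket of `𝔤` in coordinates with respect to the basis `e₁,…,e₄`:
`[X,Y]^l = Σ_{i,j} C^l_{ij} X^i Y^j`. -/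
noncomputable def gBracket (k : ℝ) (X Y : Fin 4 → ℝ) : Fin 4 → ℝ :=
  fun l => ∑ i : Fin 4, ∑ j : Fin 4, structC k i j l * X i * Y j


lemma coord1_aux : ∀ X ∈ Submodule.span ℝ ({Pi.single 0 1, Pi.single 2 1, Pi.single 3 1} :
    Set (Fin 4 → ℝ)), X 1 = 0 := by
  intro X hX
  induction hX using Submodule.span_induction with
  | mem x hx => rcases hx with h|h|h <;> subst h <;> simp [Pi.single_apply]
  | zero => simp
  | add x y _ _ hx hy => simp [hx, hy]
  | smul c x _ hx => simp [hx]

lemma brket_aux (k : ℝ) (X Y : Fin 4 → ℝ) (hX : X 1 = 0) (hY : Y 1 = 0) :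
    gBracket k X Y = (k / 2 * (X 2 * Y 3 - X 3 * Y 2)) • (Pi.single 2 1 : Fin 4 → ℝ) := by
  funext l
  fin_cases l <;>
    simp [gBracket, structC, Fin.sum_univ_four, hX, hY, Pi.single_apply] <;> ring

/-- The span `𝔥` of `{e₁, e₃, e₄}` is a Lie subalgebra of `𝔤` of
dimension 3, and for any `j₁, j₂` the functional `λ` with `λ(e₁) = j₁`, `λ(e₂) = 0`,
`λ(e₃) = 0`, `λ(e₄) = j₂` vanishes on `[𝔥,𝔥]`; i.e. `𝔥` is a polarization of `λ`. -/
theorem polarization (k : ℝ) (hk : 0 < k) :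
    (∀ X ∈ Submodule.span ℝ ({Pi.single 0 1, Pi.single 2 1, Pi.single 3 1} :
        Set (Fin 4 → ℝ)),
      ∀ Y ∈ Submodule.span ℝ ({Pi.single 0 1, Pi.single 2 1, Pi.single 3 1} :
        Set (Fin 4 → ℝ)),
      gBracket k X Y ∈ Submodule.span ℝ ({Pi.single 0 1, Pi.single 2 1, Pi.single 3 1} :
        Set (Fin 4 → ℝ))) ∧
    Module.finrank ℝ
      (Submodule.span ℝ ({Pi.single 0 1, Pi.single 2 1, Pi.single 3 1} :
        Set (Fin 4 → ℝ))) = 3 ∧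
    (∀ j₁ j₂ : ℝ,
      ∀ X ∈ Submodule.span ℝ ({Pi.single 0 1, Pi.single 2 1, Pi.single 3 1} :
        Set (Fin 4 → ℝ)),
      ∀ Y ∈ Submodule.span ℝ ({Pi.single 0 1, Pi.single 2 1, Pi.single 3 1} :
        Set (Fin 4 → ℝ)),
      j₁ * gBracket k X Y 0 + j₂ * gBracket k X Y 3 = 0) := by
  refine ⟨?_, ?_, ?_⟩
  · intro X hX Y hY
    rw [brket_aux k X Y (coord1_aux X hX) (coord1_aux Y hY)]
    exact Submodule.smul_mem _ _ (Submodule.subset_span (by simp))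
  · have hli : LinearIndependent ℝ ![(Pi.single 0 1 : Fin 4 → ℝ), Pi.single 2 1, Pi.single 3 1] := by
      have := (Pi.basisFun ℝ (Fin 4)).linearIndependent.comp ![0, 2, 3] (by decide)
      convert this using 1
      funext i; fin_cases i <;> simp [Pi.basisFun_apply]
    have hr : Set.range ![(Pi.single 0 1 : Fin 4 → ℝ), Pi.single 2 1, Pi.single 3 1]
        = {Pi.single 0 1, Pi.single 2 1, Pi.single 3 1} := by
      ext x
      simp [Fin.exists_fin_succ]; tauto
    rw [← hr, finrank_span_eq_card hli]
    simp
  · intro j₁ j₂ X hX Y hY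
    rw [brket_aux k X Y (coord1_aux X hX) (coord1_aux Y hY)]
    simp [Pi.single_apply]
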